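/- arXiv:1810.10464 — 7 statements merged into one kernel-verified Lean document; each statement's English description precedes it below -/
import Mathlib

section
/- Let f = (f_n)_{n=0}^{31} be an arbitrary family of functions where f_n maps bit-strings of length n to a single bit, and let PP_f be the canonical prefix-preserving function. For any two bit-strings a, b ∈ {0,1}^32, the length of the longest common prefix of PP_f(a) and PP_f(b) equals the length of the longest common prefix of a and b. In particular, if a and b share a k-bit prefix (agree on the first k bits and, if k < 32, differ at bit k+1), then PP_f(a) and PP_f(b) share a k-bit prefix. -/
/-- The canonical prefix-preserving anonymization function: bit `i` of the
output is bit `i` of the input XOR-ed with `f i` applied to the first `i`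
bits of the input. -/
def PP (f : (n : Fin 32) → (Fin (n : ℕ) → Bool) → Bool)
    (a : Fin 32 → Bool) : Fin 32 → Bool :=
  fun i => xor (a i) (f i (fun j => a ⟨j.val, j.isLt.trans i.isLt⟩))

/-- The longest-common-prefix length of two 32-bit strings: the largest
`k ≤ 32` such that `a` and `b` agree on their first `k` bits. -/
def Q (a b : Fin 32 → Bool) : ℕ :=
  Nat.findGreatest (fun k => ∀ i : Fin 32, i.val < k → a i = b i) 32

/-- `a` and `b` share a `k`-bit prefix: they agree on the first `k` bits and,
when `k < 32`, they differ at bit `k+1` (index `k`, zero-based). -/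
def SharePrefix (a b : Fin 32 → Bool) (k : ℕ) : Prop :=
  (∀ i : Fin 32, i.val < k → a i = b i) ∧ ∀ h : k < 32, a ⟨k, h⟩ ≠ b ⟨k, h⟩

lemma xor_cancel_right' : ∀ x y c : Bool, xor x c = xor y c → x = y := by decide

/-- The canonical prefix-preserving function preserves the longest common
prefix length, and in particular the shared-`k`-bit-prefix relation. -/
theorem PP_preserves_prefix (f : (n : Fin 32) → (Fin (n : ℕ) → Bool) → Bool)
    (a b : Fin 32 → Bool) :
    Q (PP f a) (PP f b) = Q a b ∧
      ∀ k : ℕ, SharePrefix a b k → SharePrefix (PP f a) (PP f b) k := by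
  have key : ∀ k : ℕ, (∀ i : Fin 32, i.val < k → PP f a i = PP f b i) ↔
      (∀ i : Fin 32, i.val < k → a i = b i) := by
    intro k
    constructor
    · intro h
      suffices H : ∀ n : ℕ, ∀ i : Fin 32, i.val = n → i.val < k → a i = b i by
        intro i hi; exact H i.val i rfl hi
      intro n
      induction n using Nat.strong_induction_on with
      | _ n ih =>
        intro i hin hik
        have hf : (fun j : Fin i.val => a ⟨j.val, j.isLt.trans i.isLt⟩) =
            (fun j : Fin i.val => b ⟨j.val, j.isLt.trans i.isLt⟩) := by
          funext j
          exact ih j.val (hin ▸ j.isLt) ⟨j.val, j.isLt.trans i.isLt⟩ rfl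
            (lt_trans (j.isLt.trans_le (le_of_eq rfl)) hik)
        have := h i hik
        simp only [PP, hf] at this
        exact xor_cancel_right' _ _ _ this
    · intro h i hi
      have hf : (fun j : Fin i.val => a ⟨j.val, j.isLt.trans i.isLt⟩) =
          (fun j : Fin i.val => b ⟨j.val, j.isLt.trans i.isLt⟩) := by
        funext j
        exact h ⟨j.val, j.isLt.trans i.isLt⟩ (j.isLt.trans hi)
      simp only [PP, hf, h i hi]
  constructor
  · unfold Q
    congr 1
    funext m
    exact propext (key m)
  · intro k ⟨h1, h2⟩
    refine ⟨(key k).mpr h1, fun h hc => h2 h ?_⟩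
    have hf : (fun j : Fin k => a ⟨j.val, j.isLt.trans h⟩) =
        (fun j : Fin k => b ⟨j.val, j.isLt.trans h⟩) := by
      funext j
      exact h1 ⟨j.val, j.isLt.trans h⟩ j.isLt
    simp only [PP] at hc
    have : xor (a ⟨k, h⟩) (f ⟨k, h⟩ fun j => a ⟨j.val, j.isLt.trans h⟩) =
        xor (b ⟨k, h⟩) (f ⟨k, h⟩ fun j => b ⟨j.val, j.isLt.trans h⟩) := hc
    rw [hf] at this
    exact xor_cancel_right' _ _ _ this
end

section
/- Let f = (f_n)_{n=0}^{31} be an arbitrary family of functions where f_n maps bit-strings of length n to a single bit, and let PP_f be the canonical prefix-preserving function. For every natural number j ≥ 1 and all a, b ∈ {0,1}^32, the j-fold iterate PP_f^j satisfies Q(PP_f^j(a), PP_f^j(b)) = Q(a,b), where Q denotes the longest common prefix length; in particular each iterate PP_f^j is prefix-preserving. -/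
def PrefixPreserving (F : (Fin 32 → Bool) → (Fin 32 → Bool)) : Prop :=
  ∀ (a b : Fin 32 → Bool) (k : ℕ), SharePrefix a b k → SharePrefix (F a) (F b) k

lemma PP_bit_iff (f : (n : Fin 32) → (Fin (n : ℕ) → Bool) → Bool)
    (a b : Fin 32 → Bool) (i : Fin 32)
    (h : ∀ j : Fin 32, j.val < i.val → a j = b j) :
    (PP f a i = PP f b i ↔ a i = b i) := by
  have hpre : (fun j : Fin i.val => a ⟨j.val, j.isLt.trans i.isLt⟩)
      = (fun j : Fin i.val => b ⟨j.val, j.isLt.trans i.isLt⟩) := by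
    funext j
    exact h _ j.isLt
  simp only [PP, hpre]
  cases a i <;> cases b i <;> simp

lemma PP_agree_iff (f : (n : Fin 32) → (Fin (n : ℕ) → Bool) → Bool)
    (a b : Fin 32 → Bool) (k : ℕ) :
    (∀ i : Fin 32, i.val < k → PP f a i = PP f b i) ↔
      (∀ i : Fin 32, i.val < k → a i = b i) := by
  constructor
  · intro hPP
    have H : ∀ n : ℕ, ∀ i : Fin 32, i.val = n → i.val < k → a i = b i := by
      intro n
      induction n using Nat.strong_induction_on with
      | _ n ih =>
        intro i hi hik
        have h : ∀ j : Fin 32, j.val < i.val → a j = b j := by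
          intro j hj
          exact ih j.val (hi ▸ hj) j rfl (hj.trans hik)
        exact (PP_bit_iff f a b i h).mp (hPP i hik)
    exact fun i => H i.val i rfl
  · intro h i hik
    exact (PP_bit_iff f a b i (fun j hj => h j (hj.trans hik))).mpr (h i hik)

lemma Q_PP (f : (n : Fin 32) → (Fin (n : ℕ) → Bool) → Bool)
    (a b : Fin 32 → Bool) : Q (PP f a) (PP f b) = Q a b := by
  unfold Q
  congr 1
  · funext k
    exact propext (PP_agree_iff f a b k)

lemma SharePrefix_PP (f : (n : Fin 32) → (Fin (n : ℕ) → Bool) → Bool)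
    (a b : Fin 32 → Bool) (k : ℕ) (h : SharePrefix a b k) :
    SharePrefix (PP f a) (PP f b) k := by
  obtain ⟨h1, h2⟩ := h
  refine ⟨(PP_agree_iff f a b k).mpr h1, fun hk => ?_⟩
  intro hcontra
  exact h2 hk ((PP_bit_iff f a b ⟨k, hk⟩ (fun j hj => h1 j hj)).mp hcontra)

/-- Every `j`-fold iterate (`j ≥ 1`) of the canonical prefix-preserving
function preserves the longest common prefix length; in particular each
iterate is prefix-preserving. -/
theorem PP_iterate_preserves_prefix
    (f : (n : Fin 32) → (Fin (n : ℕ) → Bool) → Bool) :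
    ∀ j : ℕ, 1 ≤ j →
      (∀ a b : Fin 32 → Bool, Q ((PP f)^[j] a) ((PP f)^[j] b) = Q a b) ∧
        PrefixPreserving ((PP f)^[j]) := by
  intro j hj
  clear hj
  induction j with
  | zero => exact ⟨fun a b => rfl, fun a b k h => h⟩
  | succ n ih =>
    have ih' := ih
    constructor
    · intro a b
      rw [Function.iterate_succ_apply', Function.iterate_succ_apply']
      rw [Q_PP]
      exact ih'.1 a b
    · intro a b k h
      rw [Function.iterate_succ_apply', Function.iterate_succ_apply']
      exact SharePrefix_PP f _ _ k (ih'.2 a b k h)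
end

section
/- Let f = (f_n)_{n=0}^{31} be an arbitrary family of functions where f_n maps bit-strings of length n to a single bit, with canonical prefix-preserving function PP_f and reverse function RPP_f. Then for every natural number n and every a ∈ {0,1}^32, RPP_f^n(PP_f^n(a)) = a and PP_f^n(RPP_f^n(a)) = a, where F^n denotes n-fold composition; i.e., applying RPP_f the same number of times undoes any number of iterations of PP_f and vice versa. -/
/-- The reverse of the canonical prefix-preserving function: bit `i` of the
output `c` is bit `i` of the input XOR-ed with `f i` applied to the first `i`
bits of `c` itself. -/
def RPP (f : (n : Fin 32) → (Fin (n : ℕ) → Bool) → Bool)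
    (b : Fin 32 → Bool) : Fin 32 → Bool
  | i => xor (b i) (f i (fun j => RPP f b ⟨j.val, j.isLt.trans i.isLt⟩))
termination_by i => i.val
decreasing_by exact j.isLt

lemma RPP_PP (f : (n : Fin 32) → (Fin (n : ℕ) → Bool) → Bool)
    (a : Fin 32 → Bool) : RPP f (PP f a) = a := by
  funext i
  obtain ⟨m, hm⟩ := i
  induction m using Nat.strong_induction_on with
  | _ m ih =>
    rw [RPP]
    have : (fun j : Fin m => RPP f (PP f a) ⟨j.val, j.isLt.trans hm⟩)
        = fun j : Fin m => a ⟨j.val, j.isLt.trans hm⟩ := by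
      funext j; exact ih _ j.isLt _
    rw [this, PP]
    cases a ⟨m, hm⟩ <;> simp

lemma PP_RPP (f : (n : Fin 32) → (Fin (n : ℕ) → Bool) → Bool)
    (b : Fin 32 → Bool) : PP f (RPP f b) = b := by
  funext i
  rw [PP]
  conv_lhs => rw [RPP]
  cases b i <;> simp

/-- Iterating the reverse function the same number of times undoes any number
of iterations of the canonical prefix-preserving function, and vice versa. -/
theorem RPP_iterate_PP_iterate (f : (n : Fin 32) → (Fin (n : ℕ) → Bool) → Bool)
    (n : ℕ) (a : Fin 32 → Bool) :
    (RPP f)^[n] ((PP f)^[n] a) = a ∧ (PP f)^[n] ((RPP f)^[n] a) = a := by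
  have h1 : Function.LeftInverse (RPP f) (PP f) := RPP_PP f
  have h2 : Function.LeftInverse (PP f) (RPP f) := PP_RPP f
  exact ⟨h1.iterate n a, h2.iterate n a⟩
end

section
/- Let D, d, α be positive integers, s : Fin d → ℕ with ∑_j s_j = D, and let T ⊆ Fin D be a fixed set of α elements. Then the number of functions g : Fin D → Fin d whose fibers have the prescribed sizes s_j and that are injective on T, multiplied by ∏_j s_j!, equals α! · (D−α)! · ∑_{A ⊆ Fin d, |A| = α} ∏_{j ∈ A} s_j. -/
open Finset

/-! Auxiliary material -/

def sigmaFstFiber {ι : Type*} (π : ι → Type*) (j : ι) :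
    {x : Σ i, π i // x.1 = j} ≃ π j where
  toFun x := x.2 ▸ x.1.2
  invFun y := ⟨⟨j, y⟩, rfl⟩
  left_inv := by rintro ⟨⟨i, y⟩, h⟩; subst h; rfl
  right_inv := by intro y; rfl

theorem sigmaFstFiber_mk {ι : Type*} (π : ι → Type*) (j : ι)
    (x : Σ i, π i) (h : x.1 = j) :
    Sigma.mk j (sigmaFstFiber π j ⟨x, h⟩) = x := by
  obtain ⟨i, y⟩ := x; subst h; rfl

def fiberFamilyEquiv {β : Type*} {d : ℕ} (t : Fin d → ℕ) (g : β → Fin d) :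
    {e : β ≃ (Σ j, Fin (t j)) // ∀ i, (e i).1 = g i} ≃
      ∀ j, ({i // g i = j} ≃ Fin (t j)) where
  toFun := fun ⟨e, he⟩ j =>
    (e.subtypeEquiv (fun i => by rw [← he i, eq_comm])).trans (sigmaFstFiber _ j)
  invFun f := ⟨(Equiv.sigmaFiberEquiv g).symm.trans (Equiv.sigmaCongrRight f),
    fun i => rfl⟩
  left_inv := by
    rintro ⟨e, he⟩
    apply Subtype.ext
    apply Equiv.ext
    intro i
    show Sigma.mk (g i) (sigmaFstFiber _ (g i) ⟨e i, he i⟩) = e i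
    exact sigmaFstFiber_mk _ _ _ _
  right_inv := by
    intro f
    funext j
    apply Equiv.ext
    rintro ⟨i, hx⟩
    subst hx
    rfl

/-- counting lemma: #{g : β → Fin d with fiber sizes t} * ∏ t! = (card β)! -/
theorem card_fiber_sizes_mul {d : ℕ} (β : Type*) [Fintype β] [DecidableEq β]
    (t : Fin d → ℕ) (h : ∑ j, t j = Fintype.card β) :
    (univ.filter fun g : β → Fin d =>
        ∀ j, (univ.filter fun i => g i = j).card = t j).card * ∏ j, (t j).factorial
      = (Fintype.card β).factorial := by
  classical
  have hcard : Fintype.card (Σ j, Fin (t j)) = Fintype.card β := by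
    simp [Fintype.card_sigma, h]
  obtain ⟨e₀⟩ := Fintype.card_eq.mp hcard
  have key : (Fintype.card β).factorial = Fintype.card (β ≃ Σ j, Fin (t j)) := by
    rw [Fintype.card_equiv e₀.symm]
  rw [key, ← Finset.card_univ]
  rw [Finset.card_eq_sum_card_fiberwise
    (f := fun e : β ≃ (Σ j, Fin (t j)) => fun i => (e i).1)
    (t := univ.filter fun g : β → Fin d =>
        ∀ j, (univ.filter fun i => g i = j).card = t j)
    (fun e _ => by
      simp only [mem_coe, mem_filter, mem_univ, true_and]
      intro j
      rw [← Fintype.card_subtype]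
      rw [Fintype.card_congr ((e.subtypeEquiv (fun i => Iff.rfl)).trans
        (sigmaFstFiber _ j))]
      simp)]
  rw [Finset.sum_congr rfl (fun g hg => ?_), Finset.sum_const, smul_eq_mul, mul_comm]
  simp only [mem_filter, mem_univ, true_and] at hg
  have : (univ.filter fun e : β ≃ (Σ j, Fin (t j)) => (fun i => (e i).1) = g).card
      = Fintype.card {e : β ≃ (Σ j, Fin (t j)) // ∀ i, (e i).1 = g i} := by
    rw [Fintype.card_subtype]
    congr 1
    apply Finset.filter_congr
    intro e _
    simp [funext_iff]
  rw [this, Fintype.card_congr (fiberFamilyEquiv t g), Fintype.card_pi]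
  refine Finset.prod_congr rfl fun j _ => ?_
  have hj : Fintype.card {i // g i = j} = t j := by
    rw [Fintype.card_subtype]; exact hg j
  rw [Fintype.card_equiv (Fintype.equivFinOfCardEq hj), hj]

lemma filter_subtype_card {n : Type*} [Fintype n] (Q P : n → Prop)
    [DecidablePred Q] [DecidablePred P] [Fintype {i // Q i}] :
    (univ.filter fun x : {i // Q i} => P x.1).card
      = (univ.filter fun i => Q i ∧ P i).card := by
  rw [← Fintype.card_subtype, ← Fintype.card_subtype]
  exact Fintype.card_congr (Equiv.subtypeSubtypeEquivSubtypeInter Q P)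

lemma inj_fiber_card {γ δ : Type*} [Fintype γ] [DecidableEq δ]
    (φ : γ → δ) (hφ : Function.Injective φ) (j : δ) :
    (univ.filter fun x => φ x = j).card = if j ∈ image φ univ then 1 else 0 := by
  split_ifs with h
  · obtain ⟨x, -, rfl⟩ := mem_image.mp h
    rw [Finset.card_eq_one]
    exact ⟨x, by ext y; simp [hφ.eq_iff, eq_comm]⟩
  · rw [Finset.card_eq_zero, Finset.filter_eq_empty_iff]
    intro x _ hx
    exact h (mem_image.mpr ⟨x, mem_univ x, hx⟩)

lemma fiber_split {D d : ℕ} (T : Finset (Fin D)) (g : Fin D → Fin d) (j : Fin d) :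
    (univ.filter fun i => g i = j).card
      = (univ.filter fun x : {i // i ∈ T} => g x.1 = j).card
        + (univ.filter fun x : {i // i ∉ T} => g x.1 = j).card := by
  classical
  have a : (univ.filter fun x : {i // i ∈ T} => g x.1 = j).card
      = (univ.filter fun i => i ∈ T ∧ g i = j).card :=
    filter_subtype_card (fun i => i ∈ T) (fun i => g i = j)
  have b : (univ.filter fun x : {i // i ∉ T} => g x.1 = j).card
      = (univ.filter fun i => ¬ i ∈ T ∧ g i = j).card :=
    filter_subtype_card (fun i => ¬ i ∈ T) (fun i => g i = j)
  rw [a, b]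
  have c := Finset.card_filter_add_card_filter_not
    (s := (univ : Finset (Fin D)).filter fun i => g i = j) (p := fun i => i ∈ T)
  rw [Finset.filter_filter, Finset.filter_filter] at c
  rw [← c]
  congr 1 <;> · congr 1; ext i; simp [and_comm]

lemma step2card {D d : ℕ} (s : Fin d → ℕ) (T : Finset (Fin D))
    (φ : {i // i ∈ T} → Fin d) (hφ : Function.Injective φ)
    (hs0 : ∀ x, s (φ x) ≠ 0) :
    (univ.filter fun g : Fin D → Fin d =>
        (∀ j, (univ.filter fun i => g i = j).card = s j) ∧
          (fun x : {i // i ∈ T} => g x.1) = φ).card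
      = (univ.filter fun g' : {i // i ∉ T} → Fin d =>
          ∀ j, (univ.filter fun x => g' x = j).card
            = s j - (if j ∈ image φ univ then 1 else 0)).card := by
  classical
  apply Finset.card_bij' (fun g _ => fun x : {i // i ∉ T} => g x.1)
    (fun g' _ => fun i => if h : i ∈ T then φ ⟨i, h⟩ else g' ⟨i, h⟩)
  · -- forward maps into target
    intro g hg
    simp only [mem_filter, mem_univ, true_and] at hg ⊢
    obtain ⟨hfib, hr⟩ := hg
    intro j
    have hsplit := fiber_split T g j
    have h1 : (univ.filter fun x : {i // i ∈ T} => g x.1 = j).card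
        = if j ∈ image φ univ then 1 else 0 := by
      rw [← inj_fiber_card φ hφ j]
      congr 1
      ext x
      simp only [mem_filter, mem_univ, true_and]
      rw [congrFun hr x]
    rw [hfib j, h1] at hsplit
    split_ifs at hsplit ⊢ <;> omega
  · -- backward maps into source
    intro g' hg'
    simp only [mem_filter, mem_univ, true_and] at hg' ⊢
    refine ⟨fun j => ?_, ?_⟩
    · have hsplit := fiber_split T
        (fun i => if h : i ∈ T then φ ⟨i, h⟩ else g' ⟨i, h⟩) j
      have h1 : (univ.filter fun x : {i // i ∈ T} =>
          (if h : x.1 ∈ T then φ ⟨x.1, h⟩ else g' ⟨x.1, h⟩) = j).card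
          = if j ∈ image φ univ then 1 else 0 := by
        rw [← inj_fiber_card φ hφ j]
        congr 1
        ext x
        simp only [mem_filter, mem_univ, true_and]
        rw [dif_pos x.2, Subtype.coe_eta]
      have h2 : (univ.filter fun x : {i // i ∉ T} =>
          (if h : x.1 ∈ T then φ ⟨x.1, h⟩ else g' ⟨x.1, h⟩) = j).card
          = s j - (if j ∈ image φ univ then 1 else 0) := by
        rw [← hg' j]
        congr 1
        ext x
        simp only [mem_filter, mem_univ, true_and]
        rw [dif_neg x.2, Subtype.coe_eta]
      rw [hsplit, h1, h2]
      split_ifs with h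
      · obtain ⟨x, -, rfl⟩ := mem_image.mp h
        have := hs0 x
        omega
      · omega
    · funext x
      show (if h : x.1 ∈ T then φ ⟨x.1, h⟩ else g' ⟨x.1, h⟩) = φ x
      rw [dif_pos x.2, Subtype.coe_eta]
  · -- left inverse
    intro g hg
    simp only [mem_filter, mem_univ, true_and] at hg
    funext i
    show (if h : i ∈ T then φ ⟨i, h⟩ else g ((⟨i, h⟩ : {i // i ∉ T}) : Fin D)) = g i
    by_cases h : i ∈ T
    · rw [dif_pos h]
      exact (congrFun hg.2 ⟨i, h⟩).symm
    · rw [dif_neg h]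
  · -- right inverse
    intro g' _
    funext x
    show (if h : x.1 ∈ T then φ ⟨x.1, h⟩ else g' ⟨x.1, h⟩) = g' x
    rw [dif_neg x.2, Subtype.coe_eta]

lemma card_subtype_mem {D : ℕ} (T : Finset (Fin D)) :
    Fintype.card {i // i ∈ T} = T.card := by
  rw [Fintype.card_congr (Equiv.refl _ : {i // i ∈ T} ≃ ↥T)]
  exact Fintype.card_coe T

lemma step2 {D d : ℕ} (s : Fin d → ℕ) (hs : ∑ j, s j = D) (T : Finset (Fin D))
    (φ : {i // i ∈ T} → Fin d) (hφ : Function.Injective φ) :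
    (univ.filter fun g : Fin D → Fin d =>
        (∀ j, (univ.filter fun i => g i = j).card = s j) ∧
          (fun x : {i // i ∈ T} => g x.1) = φ).card * ∏ j, (s j).factorial
      = (D - T.card).factorial * ∏ j ∈ image φ univ, s j := by
  classical
  by_cases hzero : ∃ x, s (φ x) = 0
  · obtain ⟨x, hx⟩ := hzero
    have h1 : (univ.filter fun g : Fin D → Fin d =>
        (∀ j, (univ.filter fun i => g i = j).card = s j) ∧
          (fun x : {i // i ∈ T} => g x.1) = φ).card = 0 := by
      rw [Finset.card_eq_zero, Finset.filter_eq_empty_iff]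
      rintro g - ⟨hfib, hr⟩
      have h2 := hfib (φ x)
      rw [hx, Finset.card_eq_zero, Finset.eq_empty_iff_forall_notMem] at h2
      exact h2 x.1 (mem_filter.mpr ⟨mem_univ _, congrFun hr x⟩)
    rw [h1, Finset.prod_eq_zero (mem_image_of_mem φ (mem_univ x)) hx]
    simp
  · push_neg at hzero
    rw [step2card s T φ hφ hzero]
    have hsum : ∑ j, (s j - if j ∈ image φ univ then 1 else 0)
        = Fintype.card {i // i ∉ T} := by
      have hle : ∀ j ∈ (univ : Finset (Fin d)),
          (if j ∈ image φ univ then 1 else 0) ≤ s j := by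
        intro j _
        split_ifs with h
        · obtain ⟨x, -, rfl⟩ := mem_image.mp h
          exact Nat.one_le_iff_ne_zero.mpr (hzero x)
        · exact Nat.zero_le _
      rw [Finset.sum_tsub_distrib univ hle, hs, Finset.sum_boole]
      have h4 : (univ.filter fun j => j ∈ image φ univ) = image φ univ := by
        ext j; simp
      rw [h4, Finset.card_image_of_injective _ hφ, card_univ, card_subtype_mem,
        Fintype.card_subtype_compl, Fintype.card_fin, card_subtype_mem]
      simp
    have hmain := card_fiber_sizes_mul {i // i ∉ T}
      (fun j => s j - if j ∈ image φ univ then 1 else 0) hsum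
    have hcardc : Fintype.card {i // i ∉ T} = D - T.card := by
      rw [Fintype.card_subtype_compl, Fintype.card_fin, card_subtype_mem]
    have hprod : ∏ j, (s j).factorial
        = (∏ j ∈ image φ univ, s j)
            * ∏ j, (s j - if j ∈ image φ univ then 1 else 0).factorial := by
      have key : ∀ j ∈ (univ : Finset (Fin d)), (s j).factorial
          = (if j ∈ image φ univ then s j else 1)
              * (s j - if j ∈ image φ univ then 1 else 0).factorial := by
        intro j _
        split_ifs with h
        · obtain ⟨x, -, rfl⟩ := mem_image.mp h
          rw [Nat.mul_factorial_pred (hzero x)]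
        · simp
      rw [Finset.prod_congr rfl key, Finset.prod_mul_distrib]
      congr 1
      rw [← Finset.prod_filter]
      congr 1
      ext j; simp
    beta_reduce at hmain
    rw [hcardc] at hmain
    rw [hprod, ← hmain]
    ring

lemma card_inj_image_eq {γ δ : Type*} [Fintype γ] [DecidableEq γ] [Fintype δ]
    [DecidableEq δ] (A : Finset δ) (hA : A.card = Fintype.card γ) :
    (univ.filter fun φ : γ → δ =>
      Function.Injective φ ∧ image φ univ = A).card = (Fintype.card γ).factorial := by
  classical
  rw [← Fintype.card_subtype]
  have e : {φ : γ → δ // Function.Injective φ ∧ image φ univ = A} ≃ (γ ↪ {a // a ∈ A}) :=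
    { toFun := fun φ => ⟨fun x => ⟨φ.1 x, by
        have := mem_image_of_mem φ.1 (mem_univ x); rwa [φ.2.2] at this⟩,
        fun a b h => φ.2.1 (congrArg Subtype.val h)⟩
      invFun := fun F => ⟨fun x => (F x).1,
        fun a b h => F.injective (Subtype.ext h), by
          apply Finset.eq_of_subset_of_card_le
          · intro j hj
            obtain ⟨x, -, rfl⟩ := mem_image.mp hj
            exact (F x).2
          · rw [hA, Finset.card_image_of_injective _
              (fun a b h => F.injective (Subtype.ext h) : Function.Injective fun x => (F x).1),
              card_univ]⟩
      left_inv := fun φ => rfl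
      right_inv := fun F => rfl }
  rw [Fintype.card_congr e, Fintype.card_embedding_eq, Fintype.card_coe, hA,
    Nat.descFactorial_self]

lemma step3 {d : ℕ} {γ : Type*} [Fintype γ] [DecidableEq γ] (s : Fin d → ℕ) :
    (∑ φ ∈ (univ.filter fun φ : γ → Fin d => Function.Injective φ),
        ∏ j ∈ image φ univ, s j)
      = (Fintype.card γ).factorial *
          ∑ A ∈ Finset.powersetCard (Fintype.card γ) (univ : Finset (Fin d)),
            ∏ j ∈ A, s j := by
  classical
  have hmap : ∀ φ ∈ (univ.filter fun φ : γ → Fin d => Function.Injective φ),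
      image φ univ ∈ Finset.powersetCard (Fintype.card γ) (univ : Finset (Fin d)) := by
    intro φ hφ
    simp only [mem_filter, mem_univ, true_and] at hφ
    rw [Finset.mem_powersetCard_univ, Finset.card_image_of_injective _ hφ, card_univ]
  rw [← Finset.sum_fiberwise_of_maps_to hmap (fun φ => ∏ j ∈ image φ univ, s j)]
  rw [Finset.mul_sum]
  refine Finset.sum_congr rfl fun A hA => ?_
  rw [Finset.mem_powersetCard_univ] at hA
  have : ∀ φ ∈ (univ.filter fun φ : γ → Fin d => Function.Injective φ).filter
      (fun φ => image φ univ = A), (∏ j ∈ image φ univ, s j) = ∏ j ∈ A, s j := by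
    intro φ hφ
    rw [(Finset.mem_filter.mp hφ).2]
  rw [Finset.sum_congr rfl this, Finset.sum_const, smul_eq_mul]
  congr 1
  rw [Finset.filter_filter]
  exact card_inj_image_eq A hA

/-- The number of assignments `g : Fin D → Fin d` with prescribed fiber sizes
`s j` that send the `α` adversary-known addresses `T` into pairwise distinct
groups, multiplied by `∏ j, (s j)!`, equals
`α! · (D − α)! · ∑_{A ⊆ Fin d, |A| = α} ∏_{j ∈ A} s j`. -/
theorem count_real_view_candidates (D d α : ℕ) (hD : 0 < D) (hd : 0 < d)
    (hα : 0 < α) (s : Fin d → ℕ) (hs : ∑ j, s j = D)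
    (T : Finset (Fin D)) (hT : T.card = α) :
    (Finset.univ.filter
        (fun g : Fin D → Fin d =>
          (∀ j, (Finset.univ.filter (fun i => g i = j)).card = s j) ∧
            ∀ x ∈ T, ∀ y ∈ T, g x = g y → x = y)).card *
        ∏ j, (s j).factorial =
      α.factorial * (D - α).factorial *
        ∑ A ∈ Finset.powersetCard α (Finset.univ : Finset (Fin d)),
          ∏ j ∈ A, s j := by
  classical
  have hmap : ∀ g ∈ (univ.filter fun g : Fin D → Fin d =>
      (∀ j, (univ.filter fun i => g i = j).card = s j) ∧
        ∀ x ∈ T, ∀ y ∈ T, g x = g y → x = y),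
      (fun x : {i // i ∈ T} => g x.1) ∈
        (univ.filter fun φ : {i // i ∈ T} → Fin d => Function.Injective φ) := by
    intro g hg
    simp only [mem_filter, mem_univ, true_and] at hg ⊢
    exact fun a b h => Subtype.ext (hg.2 a.1 a.2 b.1 b.2 h)
  rw [Finset.card_eq_sum_card_fiberwise hmap, Finset.sum_mul]
  have hterm : ∀ φ ∈ (univ.filter fun φ : {i // i ∈ T} → Fin d => Function.Injective φ),
      ((univ.filter fun g : Fin D → Fin d =>
          (∀ j, (univ.filter fun i => g i = j).card = s j) ∧
            ∀ x ∈ T, ∀ y ∈ T, g x = g y → x = y).filter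
        (fun g => (fun x : {i // i ∈ T} => g x.1) = φ)).card * ∏ j, (s j).factorial
      = (D - T.card).factorial * ∏ j ∈ image φ univ, s j := by
    intro φ hφ
    simp only [mem_filter, mem_univ, true_and] at hφ
    rw [Finset.filter_filter]
    have heq : (univ.filter fun g : Fin D → Fin d =>
        ((∀ j, (univ.filter fun i => g i = j).card = s j) ∧
          (∀ x ∈ T, ∀ y ∈ T, g x = g y → x = y)) ∧
            (fun x : {i // i ∈ T} => g x.1) = φ)
        = (univ.filter fun g : Fin D → Fin d =>
        (∀ j, (univ.filter fun i => g i = j).card = s j) ∧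
          (fun x : {i // i ∈ T} => g x.1) = φ) := by
      ext g
      simp only [mem_filter, mem_univ, true_and]
      constructor
      · rintro ⟨⟨h1, -⟩, h2⟩; exact ⟨h1, h2⟩
      · rintro ⟨h1, h2⟩
        refine ⟨⟨h1, ?_⟩, h2⟩
        intro x hx y hy hxy
        have hxy' : φ ⟨x, hx⟩ = φ ⟨y, hy⟩ := by
          rw [← congrFun h2 ⟨x, hx⟩, ← congrFun h2 ⟨y, hy⟩]; exact hxy
        exact congrArg Subtype.val (hφ hxy')
    rw [heq]
    exact step2 s hs T φ hφ
  rw [Finset.sum_congr rfl hterm, ← Finset.mul_sum, step3 s, card_subtype_mem, hT]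
  ring
end

section
/- Let D, d, α be positive integers with α ≤ D, s : Fin d → ℕ with ∑_j s_j = D, and let T ⊆ Fin D be a fixed set of α elements. Let N_inj be the number of functions g : Fin D → Fin d with fiber sizes s_j that are injective on T, and N_all the number of functions g : Fin D → Fin d with fiber sizes s_j. Then N_inj · D! = α! · (D−α)! · (∑_{A ⊆ Fin d, |A| = α} ∏_{j ∈ A} s_j) · N_all; equivalently, the probability that a uniformly random such assignment sends the α elements of T to pairwise distinct groups equals α! · (∑_{|A|=α} ∏_{j∈A} s_j) / (D(D−1)⋯(D−α+1)). -/
open Finset Function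

namespace RealViewAux

variable {D d α : ℕ}

/-- Any two injective maps `Fin m → Fin n` differ by a permutation of `Fin n`. -/
lemma exists_perm_comp {n m : ℕ} {y1 y2 : Fin m → Fin n} (h1 : Injective y1)
    (h2 : Injective y2) : ∃ σ : Equiv.Perm (Fin n), ∀ i, σ (y1 i) = y2 i := by
  classical
  have hc : Fintype.card ↥(Set.range y1)ᶜ = Fintype.card ↥(Set.range y2)ᶜ := by
    rw [Fintype.card_compl_set, Fintype.card_compl_set,
      Set.card_range_of_injective h1, Set.card_range_of_injective h2]
  refine ⟨(Equiv.Set.sumCompl (Set.range y1)).symm.trans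
    ((Equiv.sumCongr ((Equiv.ofInjective y1 h1).symm.trans (Equiv.ofInjective y2 h2))
      (Fintype.equivOfCardEq hc)).trans (Equiv.Set.sumCompl (Set.range y2))), fun i => ?_⟩
  have hmem : y1 i ∈ Set.range y1 := Set.mem_range_self i
  have h1' : (Equiv.Set.sumCompl (Set.range y1)).symm (y1 i) = Sum.inl ⟨y1 i, hmem⟩ :=
    Equiv.Set.sumCompl_symm_apply_of_mem hmem
  have h2' : (Equiv.ofInjective y1 h1).symm ⟨y1 i, hmem⟩ = i := by
    rw [Equiv.symm_apply_eq]; rfl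
  simp [h1', h2']

/-- Fiber cardinalities are invariant under precomposition with a permutation. -/
lemma fiber_card_comp (σ : Equiv.Perm (Fin D)) (g : Fin D → Fin d) (j : Fin d) :
    (Finset.univ.filter (fun i => g (σ i) = j)).card
      = (Finset.univ.filter (fun i => g i = j)).card :=
  Finset.card_equiv σ (by simp)

/-- The number of assignments with prescribed fiber sizes injective on the range
of an injective tuple does not depend on the tuple. -/
lemma inj_count_invariant (s : Fin d → ℕ) {y1 y2 : Fin α → Fin D}
    (h1 : Injective y1) (h2 : Injective y2) :
    (Finset.univ.filter (fun g : Fin D → Fin d =>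
        (∀ j, (Finset.univ.filter (fun i => g i = j)).card = s j) ∧ Injective (g ∘ y1))).card
      = (Finset.univ.filter (fun g : Fin D → Fin d =>
        (∀ j, (Finset.univ.filter (fun i => g i = j)).card = s j) ∧ Injective (g ∘ y2))).card := by
  classical
  obtain ⟨σ, hσ⟩ := exists_perm_comp h1 h2
  let e : (Fin D → Fin d) ≃ (Fin D → Fin d) :=
    { toFun := fun g => g ∘ σ.symm
      invFun := fun g => g ∘ σ
      left_inv := fun g => by funext x; simp
      right_inv := fun g => by funext x; simp }
  refine Finset.card_equiv e (fun g => ?_)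
  have hcomp : (g ∘ ⇑σ.symm) ∘ y2 = g ∘ y1 := by
    funext i
    simp only [Function.comp_apply]
    congr 1
    rw [Equiv.symm_apply_eq, hσ i]
  have hfib_iff : ∀ j, (Finset.univ.filter (fun i => (g ∘ ⇑σ.symm) i = j)).card
      = (Finset.univ.filter (fun i => g i = j)).card := fun j => by
    exact fiber_card_comp σ.symm g j
  simp only [Finset.mem_filter, Finset.mem_univ, true_and]
  show _ ↔ (∀ j, (Finset.univ.filter (fun i => (g ∘ ⇑σ.symm) i = j)).card = s j)
      ∧ Function.Injective ((g ∘ ⇑σ.symm) ∘ y2)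
  rw [hcomp]
  exact and_congr (forall_congr' fun j => by rw [hfib_iff j]) Iff.rfl

/-- The number of injective functions `Fin α → Fin d` with image a fixed
`α`-element set `A` is `α!`. -/
lemma count_inj_with_image (A : Finset (Fin d)) (hA : A.card = α) :
    (Finset.univ.filter (fun h : Fin α → Fin d =>
        Injective h ∧ Finset.univ.image h = A)).card = α.factorial := by
  classical
  have e : {h : Fin α → Fin d // Injective h ∧ Finset.univ.image h = A} ≃ (Fin α ↪ ↥A) :=
    { toFun := fun h => ⟨fun k => ⟨h.1 k, by
        have hm : h.1 k ∈ Finset.univ.image h.1 := Finset.mem_image_of_mem _ (Finset.mem_univ k)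
        rwa [h.2.2] at hm⟩,
        fun a b hab => h.2.1 (congrArg Subtype.val hab)⟩
      invFun := fun f => ⟨fun k => (f k : Fin d), by
        constructor
        · intro a b hab
          exact f.injective (Subtype.ext hab)
        · apply Finset.eq_of_subset_of_card_le
          · intro x hx
            obtain ⟨k, _, rfl⟩ := Finset.mem_image.mp hx
            exact (f k).2
          · rw [hA, Finset.card_image_of_injective _ (fun a b hab => f.injective (Subtype.ext hab))]
            simp⟩
      left_inv := fun h => by ext k; rfl
      right_inv := fun f => by ext k; rfl }
  rw [← Fintype.card_subtype, Fintype.card_congr e, Fintype.card_embedding_eq,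
    Fintype.card_coe, hA, Fintype.card_fin, Nat.descFactorial_self]

/-- Summing `∏ i, s (h i)` over injective `h : Fin α → Fin d`. -/
lemma sum_over_inj (s : Fin d → ℕ) :
    ∑ h ∈ Finset.univ.filter (fun h : Fin α → Fin d => Injective h), ∏ i, s (h i)
      = α.factorial *
          ∑ A ∈ Finset.powersetCard α (Finset.univ : Finset (Fin d)), ∏ j ∈ A, s j := by
  classical
  rw [← Finset.sum_fiberwise_of_maps_to (g := fun h : Fin α → Fin d => Finset.univ.image h)
    (t := Finset.powersetCard α (Finset.univ : Finset (Fin d)))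
    (fun h hh => by
      rw [Finset.mem_powersetCard]
      refine ⟨Finset.subset_univ _, ?_⟩
      rw [Finset.card_image_of_injective _ (Finset.mem_filter.mp hh).2]
      simp)]
  rw [Finset.mul_sum]
  refine Finset.sum_congr rfl (fun A hA => ?_)
  rw [Finset.mem_powersetCard] at hA
  have : ∀ h ∈ (Finset.univ.filter (fun h : Fin α → Fin d => Injective h)).filter
      (fun h => Finset.univ.image h = A), (∏ i, s (h i)) = ∏ j ∈ A, s j := by
    intro h hh
    simp only [Finset.mem_filter, Finset.mem_univ, true_and] at hh
    rw [← hh.2, Finset.prod_image (fun x _ y _ hxy => hh.1 hxy)]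
  rw [Finset.sum_congr rfl this, Finset.sum_const, smul_eq_mul]
  rw [Finset.filter_filter]
  rw [count_inj_with_image A hA.2]

/-- For an assignment `g` with fiber sizes `s`, the number of tuples
`y : Fin α → Fin D` with `g ∘ y` injective. -/
lemma count_good_tuples (s : Fin d → ℕ) (g : Fin D → Fin d)
    (hg : ∀ j, (Finset.univ.filter (fun i => g i = j)).card = s j) :
    (Finset.univ.filter (fun y : Fin α → Fin D => Injective (g ∘ y))).card
      = α.factorial *
          ∑ A ∈ Finset.powersetCard α (Finset.univ : Finset (Fin d)), ∏ j ∈ A, s j := by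
  classical
  rw [Finset.card_eq_sum_card_fiberwise (f := fun y : Fin α → Fin D => g ∘ y)
    (t := Finset.univ.filter (fun h : Fin α → Fin d => Injective h))
    (fun y hy => by
      simp only [Finset.mem_coe, Finset.mem_filter, Finset.mem_univ, true_and] at hy ⊢
      exact hy)]
  rw [← sum_over_inj s]
  refine Finset.sum_congr rfl (fun h hh => ?_)
  simp only [Finset.mem_filter, Finset.mem_univ, true_and] at hh
  have hset : (Finset.univ.filter (fun y : Fin α → Fin D => Injective (g ∘ y))).filter
      (fun y => g ∘ y = h) = Fintype.piFinset (fun i => Finset.univ.filter (fun x => g x = h i)) := by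
    ext y
    simp only [Finset.mem_filter, Finset.mem_univ, true_and, Fintype.mem_piFinset]
    constructor
    · rintro ⟨_, rfl⟩
      intro i; rfl
    · intro hy
      have hcomp : g ∘ y = h := funext hy
      exact ⟨hcomp ▸ hh, hcomp⟩
  rw [hset, Fintype.card_piFinset]
  exact Finset.prod_congr rfl (fun i _ => hg (h i))

/-- The number of injective tuples `Fin α → Fin D`. -/
lemma count_inj_tuples : (Finset.univ.filter (fun y : Fin α → Fin D => Injective y)).card
    = D.descFactorial α := by
  classical
  rw [← Fintype.card_subtype,
    Fintype.card_congr (Equiv.subtypeInjectiveEquivEmbedding (Fin α) (Fin D)),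
    Fintype.card_embedding_eq, Fintype.card_fin, Fintype.card_fin]

/-- Existence of an assignment with prescribed fiber sizes. -/
lemma exists_assignment (s : Fin d → ℕ) (hs : ∑ j, s j = D) :
    ∃ g : Fin D → Fin d, ∀ j, (Finset.univ.filter (fun i => g i = j)).card = s j := by
  classical
  have hcard : Fintype.card (Σ j : Fin d, Fin (s j)) = Fintype.card (Fin D) := by
    simp [Fintype.card_sigma, hs]
  let e : (Σ j : Fin d, Fin (s j)) ≃ Fin D := Fintype.equivOfCardEq hcard
  refine ⟨fun x => (e.symm x).1, fun j => ?_⟩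
  have h1 : ((Finset.univ : Finset (Σ j : Fin d, Fin (s j))).filter (fun p => p.1 = j)).card
      = (Finset.univ.filter (fun x : Fin D => (e.symm x).1 = j)).card :=
    Finset.card_equiv e (by simp)
  have h2 : ((Finset.univ : Finset (Fin (s j))).card)
      = ((Finset.univ : Finset (Σ j : Fin d, Fin (s j))).filter (fun p => p.1 = j)).card := by
    refine Finset.card_bij (fun b _ => ⟨j, b⟩) (by simp) ?_ ?_
    · intro a _ b _ hab
      simpa using hab
    · rintro ⟨j', b⟩ hp
      simp only [Finset.mem_filter, Finset.mem_univ, true_and] at hp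
      subst hp
      exact ⟨b, Finset.mem_univ _, rfl⟩
  rw [← h1, ← h2]
  simp

/-- Casting the falling factorial to ℚ. -/
lemma prod_sub_eq_descFactorial (D : ℕ) : ∀ k ≤ D,
    ∏ i ∈ Finset.range k, ((D : ℚ) - i) = (D.descFactorial k : ℚ) := by
  intro k
  induction k with
  | zero => simp
  | succ k ih =>
    intro hk
    rw [Finset.prod_range_succ, ih (Nat.le_of_succ_le hk), Nat.descFactorial_succ]
    have : ((D - k : ℕ) : ℚ) = (D : ℚ) - k := by
      have hkD : k ≤ D := Nat.le_of_succ_le hk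
      push_cast [hkD]
      ring
    rw [Nat.cast_mul, this]
    ring

end RealViewAux

/-- Let `N_all` count the assignments `g : Fin D → Fin d` with prescribed
fiber sizes `s j` and `N_inj` those that are additionally injective on the
fixed `α`-element set `T` of adversary-known addresses.  Then
`N_inj · D! = α! · (D−α)! · (∑_{|A| = α} ∏_{j ∈ A} s j) · N_all`;
equivalently, the probability that a uniformly random such assignment sends
the `α` elements of `T` to pairwise distinct groups equals
`α! · (∑_{|A|=α} ∏_{j∈A} s j) / (D(D−1)⋯(D−α+1))`. -/
theorem real_view_candidate_probability (D d α : ℕ) (hD : 0 < D) (hd : 0 < d)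
    (hα : 0 < α) (hαD : α ≤ D) (s : Fin d → ℕ) (hs : ∑ j, s j = D)
    (T : Finset (Fin D)) (hT : T.card = α) (Ninj Nall : ℕ)
    (hNinj : Ninj =
      (Finset.univ.filter
        (fun g : Fin D → Fin d =>
          (∀ j, (Finset.univ.filter (fun i => g i = j)).card = s j) ∧
            ∀ x ∈ T, ∀ y ∈ T, g x = g y → x = y)).card)
    (hNall : Nall =
      (Finset.univ.filter
        (fun g : Fin D → Fin d =>
          ∀ j, (Finset.univ.filter (fun i => g i = j)).card = s j)).card) :
    Ninj * D.factorial =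
        α.factorial * (D - α).factorial *
          (∑ A ∈ Finset.powersetCard α (Finset.univ : Finset (Fin d)),
            ∏ j ∈ A, s j) * Nall ∧
      (Ninj : ℚ) / Nall =
        (α.factorial *
            ∑ A ∈ Finset.powersetCard α (Finset.univ : Finset (Fin d)),
              ∏ j ∈ A, (s j : ℚ)) /
          ∏ i ∈ Finset.range α, ((D : ℚ) - i) := by
  classical
  set S0 : ℕ := ∑ A ∈ Finset.powersetCard α (Finset.univ : Finset (Fin d)), ∏ j ∈ A, s j with hS0
  -- an enumeration of T
  obtain eT := T.equivFinOfCardEq hT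
  set yT : Fin α → Fin D := fun i => ((eT.symm i : T) : Fin D) with hyT
  have hyTinj : Function.Injective yT := fun a b hab => by
    apply eT.symm.injective
    exact Subtype.ext hab
  have hyTmem : ∀ i, yT i ∈ T := fun i => (eT.symm i).2
  have hyTsurj : ∀ x ∈ T, ∃ i, yT i = x := fun x hx =>
    ⟨eT ⟨x, hx⟩, by simp [hyT]⟩
  -- rewrite the Ninj predicate via yT
  have hNinj' : Ninj = (Finset.univ.filter
      (fun g : Fin D → Fin d =>
        (∀ j, (Finset.univ.filter (fun i => g i = j)).card = s j) ∧
          Function.Injective (g ∘ yT))).card := by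
    rw [hNinj]
    congr 1
    apply Finset.filter_congr
    intro g _
    constructor
    · rintro ⟨hfib, hio⟩
      refine ⟨hfib, fun a b hab => hyTinj (hio _ (hyTmem a) _ (hyTmem b) hab)⟩
    · rintro ⟨hfib, hinj⟩
      refine ⟨hfib, fun x hx y hy hxy => ?_⟩
      obtain ⟨i, rfl⟩ := hyTsurj x hx
      obtain ⟨i', rfl⟩ := hyTsurj y hy
      exact congrArg yT (hinj hxy)
  set G : Finset (Fin D → Fin d) := Finset.univ.filter
    (fun g : Fin D → Fin d => ∀ j, (Finset.univ.filter (fun i => g i = j)).card = s j) with hG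
  -- the key double counting
  have key : Nall * (α.factorial * S0) = D.descFactorial α * Ninj := by
    calc Nall * (α.factorial * S0)
        = ∑ g ∈ G, (α.factorial * S0) := by rw [Finset.sum_const, smul_eq_mul, hNall, hG]
      _ = ∑ g ∈ G, (Finset.univ.filter
            (fun y : Fin α → Fin D => Function.Injective (g ∘ y))).card := by
          refine (Finset.sum_congr rfl (fun g hg => ?_)).symm
          rw [hG, Finset.mem_filter] at hg
          exact RealViewAux.count_good_tuples s g hg.2
      _ = ∑ g ∈ G, ∑ y : Fin α → Fin D, (if Function.Injective (g ∘ y) then 1 else 0) := by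
          refine Finset.sum_congr rfl (fun g _ => ?_)
          rw [Finset.card_filter]
      _ = ∑ y : Fin α → Fin D, ∑ g ∈ G, (if Function.Injective (g ∘ y) then 1 else 0) :=
          Finset.sum_comm
      _ = ∑ y : Fin α → Fin D, (G.filter
            (fun g => Function.Injective (g ∘ y))).card := by
          refine Finset.sum_congr rfl (fun y _ => ?_)
          rw [Finset.card_filter]
      _ = ∑ y : Fin α → Fin D, (if Function.Injective y then Ninj else 0) := by
          refine Finset.sum_congr rfl (fun y _ => ?_)
          by_cases hy : Function.Injective y
          · rw [if_pos hy]
            rw [hG, Finset.filter_filter, hNinj']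
            exact (RealViewAux.inj_count_invariant s hy hyTinj)
          · rw [if_neg hy, Finset.card_eq_zero, Finset.filter_eq_empty_iff]
            intro g _
            intro hinj
            exact hy (Function.Injective.of_comp hinj)
      _ = (Finset.univ.filter (fun y : Fin α → Fin D => Function.Injective y)).card * Ninj := by
          rw [← Finset.sum_filter, Finset.sum_const, smul_eq_mul]
      _ = D.descFactorial α * Ninj := by rw [RealViewAux.count_inj_tuples]
  have hfact : (D - α).factorial * D.descFactorial α = D.factorial :=
    Nat.factorial_mul_descFactorial hαD
  constructor
  · calc Ninj * D.factorial
        = Ninj * ((D - α).factorial * D.descFactorial α) := by rw [hfact]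
      _ = (D.descFactorial α * Ninj) * (D - α).factorial := by ring
      _ = (Nall * (α.factorial * S0)) * (D - α).factorial := by rw [key]
      _ = α.factorial * (D - α).factorial * S0 * Nall := by ring
  · -- rational part
    have hNall0 : Nall ≠ 0 := by
      obtain ⟨g, hg⟩ := RealViewAux.exists_assignment s hs
      rw [hNall, hG]
      refine Finset.card_ne_zero_of_mem (a := g) ?_
      simp only [Finset.mem_filter, Finset.mem_univ, true_and]
      exact hg
    have hdesc0 : D.descFactorial α ≠ 0 := by
      intro h
      rw [Nat.descFactorial_eq_zero_iff_lt] at h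
      exact absurd h (Nat.not_lt.mpr hαD)
    have hprod : ∏ i ∈ Finset.range α, ((D : ℚ) - i) = (D.descFactorial α : ℚ) :=
      RealViewAux.prod_sub_eq_descFactorial D α hαD
    rw [hprod]
    have hScast : (α.factorial : ℚ) *
        ∑ A ∈ Finset.powersetCard α (Finset.univ : Finset (Fin d)), ∏ j ∈ A, (s j : ℚ)
        = ((α.factorial * S0 : ℕ) : ℚ) := by
      push_cast [hS0]
      ring
    rw [hScast]
    rw [div_eq_div_iff (by exact_mod_cast hNall0) (by exact_mod_cast hdesc0)]
    have keyQ : (Nall : ℚ) * ((α.factorial * S0 : ℕ) : ℚ) = (D.descFactorial α : ℚ) * Ninj := by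
      exact_mod_cast congrArg (fun n : ℕ => (n : ℚ)) (by push_cast; exact_mod_cast key)
    linarith [keyQ]
end

section
/- (Maclaurin's inequality) Let b₁, ..., b_n be positive real numbers and for k = 1, ..., n let M_k = e_k(b) / C(n,k), where e_k(b) = ∑_{1 ≤ i₁ < ... < i_k ≤ n} b_{i₁}⋯b_{i_k} is the k-th elementary symmetric polynomial and C(n,k) the binomial coefficient. Then M₁ ≥ M₂^{1/2} ≥ M₃^{1/3} ≥ ... ≥ M_n^{1/n}; i.e., for all 1 ≤ k ≤ l ≤ n, M_k^{1/k} ≥ M_l^{1/l}. -/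
open Finset Real
section MaclaurinAux
open Polynomial


noncomputable def macE (n k : ℕ) (b : Fin n → ℝ) : ℝ :=
  ∑ A ∈ Finset.powersetCard k (Finset.univ : Finset (Fin n)), ∏ i ∈ A, b i

noncomputable def macP (n k : ℕ) (b : Fin n → ℝ) : ℝ := macE n k b / (n.choose k)

lemma macE_pos {n k : ℕ} {b : Fin n → ℝ} (hb : ∀ i, 0 < b i) (hk : k ≤ n) :
    0 < macE n k b := by
  apply Finset.sum_pos
  · intro A hA
    exact Finset.prod_pos fun i _ => hb i
  · exact Finset.powersetCard_nonempty.2 (by simpa using hk)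

lemma macE_zero (n : ℕ) (b : Fin n → ℝ) : macE n 0 b = 1 := by
  simp [macE]

lemma macE_one (n : ℕ) (b : Fin n → ℝ) : macE n 1 b = ∑ i, b i := by
  simp [macE, Finset.powersetCard_one, Finset.sum_map]

lemma macE_self (n : ℕ) (b : Fin n → ℝ) : macE n n b = ∏ i, b i := by
  have h : Finset.powersetCard n (Finset.univ : Finset (Fin n)) = {Finset.univ} := by
    have := Finset.powersetCard_self (Finset.univ : Finset (Fin n))
    simpa using this
  simp [macE, h]



lemma macE_compl {n k : ℕ} (b : Fin n → ℝ) (hb : ∀ i, 0 < b i) (hk : k ≤ n) :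
    macE n k (fun i => (b i)⁻¹) * ∏ i, b i = macE n (n - k) b := by
  rw [macE, macE, Finset.sum_mul]
  refine Finset.sum_nbij' (fun A => Aᶜ) (fun A => Aᶜ) ?_ ?_ ?_ ?_ ?_
  · intro A hA
    rw [Finset.mem_powersetCard] at hA ⊢
    refine ⟨Finset.subset_univ _, ?_⟩
    rw [Finset.card_compl, hA.2]
    simp
  · intro A hA
    rw [Finset.mem_powersetCard] at hA ⊢
    refine ⟨Finset.subset_univ _, ?_⟩
    rw [Finset.card_compl, hA.2]
    simp only [Fintype.card_fin]
    omega
  · intro A _; simp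
  · intro A _; simp
  · intro A hA
    have hprod : (∏ i ∈ A, b i) * ∏ i ∈ Aᶜ, b i = ∏ i, b i :=
      Finset.prod_mul_prod_compl A b
    have hpos : 0 < ∏ i ∈ A, b i := Finset.prod_pos fun i _ => hb i
    rw [Finset.prod_inv_distrib, ← hprod]
    field_simp

lemma pair_aux {ι : Type*} [DecidableEq ι] (s : Finset ι) (a : ι → ℝ) :
    2 * ∑ A ∈ s.powersetCard 2, ∏ i ∈ A, a i
      = (∑ i ∈ s, a i) ^ 2 - ∑ i ∈ s, (a i) ^ 2 := by
  induction s using Finset.induction_on with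
  | empty =>
      rw [Finset.powersetCard_eq_empty.2 (by norm_num)]
      simp
  | @insert x s hx ih =>
      rw [Finset.powersetCard_succ_insert hx, Finset.sum_union, Finset.sum_image]
      · have key : ∑ A ∈ s.powersetCard 1, ∏ i ∈ insert x A, a i
            = a x * ∑ i ∈ s, a i := by
          rw [Finset.powersetCard_one, Finset.sum_map, Finset.mul_sum]
          refine Finset.sum_congr rfl fun i hi => ?_
          have hxi : x ∉ ({i} : Finset ι) := by
            simp only [Finset.mem_singleton]
            exact fun h => hx (h ▸ hi)
          simp [Finset.prod_insert hxi]
        rw [key, Finset.sum_insert hx, Finset.sum_insert hx]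
        ring_nf
        linarith [ih]
      · intro A hA B hB hAB
        rw [Finset.mem_coe, Finset.mem_powersetCard] at hA hB
        have : ∀ C : Finset ι, C ⊆ s → (insert x C).erase x = C := fun C hC =>
          Finset.erase_insert (fun h => hx (hC h))
        rw [← this A hA.1, ← this B hB.1, hAB]
      · rw [Finset.disjoint_left]
        intro A hA hA'
        rw [Finset.mem_powersetCard] at hA
        rw [Finset.mem_image] at hA'
        obtain ⟨B, hB, rfl⟩ := hA'
        exact hx (hA.1 (Finset.mem_insert_self x B))



lemma macE_coeff {n : ℕ} (b : Fin n → ℝ) {k : ℕ} (hk : k ≤ n) :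
    (∏ i, (X + C (b i))).coeff k = macE n (n - k) b := by
  rw [Finset.prod_X_add_C_coeff _ _ (by simpa using hk), macE]
  simp

lemma exists_fn_of_card {α : Type*} {n : ℕ} (t : Multiset α) (h : Multiset.card t = n) :
    ∃ c : Fin n → α, (Finset.univ.val.map c : Multiset α) = t := by
  obtain ⟨l, rfl⟩ : ∃ l : List α, (l : Multiset α) = t := ⟨t.toList, Multiset.coe_toList t⟩
  simp only [Multiset.coe_card] at h
  subst h
  exact ⟨l.get, by rw [Fin.univ_val_map, List.ofFn_get]⟩

lemma macE_esymm {n : ℕ} (c : Fin n → ℝ) (j : ℕ) :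
    macE n j c = ((Finset.univ.val.map c : Multiset ℝ)).esymm j := by
  rw [Finset.esymm_map_val, macE]

lemma exists_deriv (n : ℕ) (b : Fin (n+1) → ℝ) (hb : ∀ i, 0 < b i) :
    ∃ c : Fin n → ℝ, (∀ i, 0 < c i) ∧
      ∀ j, j ≤ n → ((n:ℝ)+1) * macE n j c = ((n + 1 - j : ℕ) : ℝ) * macE (n+1) j b := by
  classical
  set q : ℝ[X] := ∏ i, (X + C (b i)) with hq
  have hqmonic : q.Monic := monic_prod_of_monic _ _ fun i _ => monic_X_add_C _
  have hqdeg : q.natDegree = n + 1 := by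
    rw [hq, natDegree_prod _ _ fun i _ => (monic_X_add_C (b i)).ne_zero]
    simp [natDegree_X_add_C]
  have hqroots : q.roots = Finset.univ.val.map fun i => -(b i) := by
    have h2 : q = ((Finset.univ.val.map fun i : Fin (n+1) => -(b i)).map
        fun a => X - C a).prod := by
      rw [hq, Finset.prod_eq_multiset_prod, Multiset.map_map]
      congr 1
      refine Multiset.map_congr rfl fun i _ => ?_
      simp [sub_neg_eq_add]
    rw [h2, roots_multiset_prod_X_sub_C]
  have hderiv_pos : ∀ x : ℝ, 0 ≤ x → 0 < (derivative q).eval x := by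
    intro x hx
    rw [hq, Finset.prod_eq_multiset_prod, derivative_prod]
    rw [← Finset.sum_eq_multiset_sum, eval_finset_sum]
    apply Finset.sum_pos
    · intro i _
      rw [derivative_X_add_C, mul_one, ← Finset.erase_val, ← Finset.prod_eq_multiset_prod,
        eval_prod]
      apply Finset.prod_pos
      intro j _
      simp only [eval_add, eval_X, eval_C]
      linarith [hb j]
    · exact Finset.univ_nonempty
  have hcoeffq' : (derivative q).coeff n = (n : ℝ) + 1 := by
    rw [coeff_derivative]
    have h1 : q.coeff (n+1) = 1 := by
      have := hqmonic.coeff_natDegree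
      rwa [hqdeg] at this
    rw [h1]
    push_cast
    ring
  have hq'deg : (derivative q).natDegree = n := by
    refine le_antisymm ?_ (le_natDegree_of_ne_zero (by rw [hcoeffq']; positivity))
    have := natDegree_derivative_le q
    omega
  have hq'cardroots : Multiset.card (derivative q).roots = n := by
    have h1 : Multiset.card q.roots = n + 1 := by rw [hqroots]; simp
    have h2 := q.card_roots_le_derivative
    have h3 := (derivative q).card_roots'
    omega
  have hlead : (derivative q).leadingCoeff = (n : ℝ) + 1 := by
    rw [Polynomial.leadingCoeff, hq'deg, hcoeffq']
  have hfact : C ((n:ℝ)+1) * ((derivative q).roots.map fun a => X - C a).prod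
      = derivative q := by
    have := C_leadingCoeff_mul_prod_multiset_X_sub_C
      (p := derivative q) (by rw [hq'deg, hq'cardroots])
    rwa [hlead] at this
  have hneg : ∀ r ∈ (derivative q).roots, r < 0 := by
    intro r hr
    have h0 : (derivative q).eval r = 0 := isRoot_of_mem_roots hr
    by_contra h
    push_neg at h
    exact absurd h0 (ne_of_gt (hderiv_pos r h))
  set t : Multiset ℝ := (derivative q).roots.map fun r => -r with ht
  have htcard : Multiset.card t = n := by rw [ht, Multiset.card_map, hq'cardroots]
  obtain ⟨c, hc⟩ := exists_fn_of_card t htcard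
  have hcpos : ∀ i, 0 < c i := by
    intro i
    have : c i ∈ t := by
      rw [← hc]
      exact Multiset.mem_map_of_mem c (Finset.mem_univ_val i)
    rw [ht, Multiset.mem_map] at this
    obtain ⟨r, hr, hrc⟩ := this
    rw [← hrc]
    exact neg_pos.2 (hneg r hr)
  refine ⟨c, hcpos, fun m hm => ?_⟩
  -- rewrite derivative q as (n+1) * ∏ (X + C t_i)
  have hfact2 : derivative q = C ((n:ℝ)+1) * (t.map fun a => X + C a).prod := by
    rw [← hfact]
    congr 1
    rw [ht, Multiset.map_map]
    exact congr_arg Multiset.prod (Multiset.map_congr rfl fun r _ => by simp [sub_eq_add_neg])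
  -- compare coeff (n - m)
  have key : (derivative q).coeff (n - m) = ((n:ℝ)+1) * t.esymm m := by
    rw [hfact2, coeff_C_mul, Multiset.prod_X_add_C_coeff t (by omega)]
    rw [htcard]
    congr 2
    omega
  have key2 : (derivative q).coeff (n - m)
      = macE (n+1) m b * ((n + 1 - m : ℕ) : ℝ) := by
    rw [coeff_derivative, hq]
    have h1 : (n - m) + 1 ≤ n + 1 := by omega
    rw [macE_coeff b h1]
    have h2 : (n + 1) - ((n-m)+1) = m := by omega
    rw [h2]
    congr 1
    rw [show n + 1 - m = (n - m) + 1 by omega]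
    push_cast
    ring
  rw [macE_esymm, hc, ← key, key2]
  ring



lemma macP_pos {n k : ℕ} {b : Fin n → ℝ} (hb : ∀ i, 0 < b i) (hk : k ≤ n) :
    0 < macP n k b := by
  apply div_pos (macE_pos hb hk)
  exact_mod_cast Nat.choose_pos hk

lemma macP_zero (n : ℕ) (b : Fin n → ℝ) : macP n 0 b = 1 := by
  simp [macP, macE_zero]

lemma macP_transfer {n j : ℕ} (hj : j ≤ n) (c : Fin n → ℝ) (b : Fin (n+1) → ℝ)
    (h : ((n:ℝ)+1) * macE n j c = ((n + 1 - j : ℕ) : ℝ) * macE (n+1) j b) :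
    macP n j c = macP (n+1) j b := by
  have hch : (n.choose j : ℝ) * ((n:ℝ)+1) = ((n+1).choose j : ℝ) * ((n + 1 - j : ℕ) : ℝ) := by
    exact_mod_cast Nat.choose_mul_succ_eq n j
  have h1 : (0:ℝ) < n.choose j := by exact_mod_cast Nat.choose_pos hj
  have h2 : (0:ℝ) < (n+1).choose j := by exact_mod_cast Nat.choose_pos (by omega)
  rw [macP, macP, div_eq_div_iff (ne_of_gt h1) (ne_of_gt h2)]
  apply mul_right_cancel₀ (show ((n:ℝ)+1) ≠ 0 by positivity)
  linear_combination (((n+1).choose j : ℝ)) * h - macE (n+1) j b * hch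

lemma choose_two_real (m : ℕ) : ((m+2).choose 2 : ℝ) * 2 = (m+2) * (m+1) := by
  have he : m + 2 - 1 = m + 1 := rfl
  have hdvd : 2 ∣ (m+2) * (m+2-1) := by
    have := (Nat.even_mul_succ_self (m+1)).two_dvd
    rwa [he, Nat.mul_comm]
  have h : (m+2).choose 2 * 2 = (m+2) * (m+1) := by
    rw [Nat.choose_two_right, Nat.div_mul_cancel hdvd, he]
  exact_mod_cast h

lemma newton_base (m : ℕ) (b : Fin (m+2) → ℝ) (hb : ∀ i, 0 < b i) :
    macP (m+2) m b * macP (m+2) (m+2) b ≤ macP (m+2) (m+1) b ^ 2 := by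
  set a : Fin (m+2) → ℝ := fun i => (b i)⁻¹ with ha
  have hapos : ∀ i, 0 < a i := fun i => inv_pos.2 (hb i)
  have hPr : (0:ℝ) < ∏ i, b i := Finset.prod_pos fun i _ => hb i
  set S : ℝ := ∑ i, a i with hS
  set Q : ℝ := ∑ i, (a i)^2 with hQ
  have hSpos : 0 < S := Finset.sum_pos (fun i _ => hapos i) Finset.univ_nonempty
  have hcauchy : S ^ 2 ≤ (m+2) * Q := by
    have := sq_sum_le_card_mul_sum_sq (s := (Finset.univ : Finset (Fin (m+2)))) (f := a)
    simpa using this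
  have hpair : 2 * macE (m+2) 2 a = S ^ 2 - Q := by
    rw [macE]
    exact pair_aux Finset.univ a
  have h1 : macE (m+2) (m+1) b = S * ∏ i, b i := by
    have h := macE_compl b hb (k := 1) (by omega)
    have e : m + 2 - 1 = m + 1 := by omega
    rw [e, macE_one] at h
    exact h.symm
  have h2 : macE (m+2) m b = macE (m+2) 2 a * ∏ i, b i := by
    have h := macE_compl b hb (k := 2) (by omega)
    have e : m + 2 - 2 = m := by omega
    rw [e] at h
    exact h.symm
  have h3 : macE (m+2) (m+2) b = ∏ i, b i := macE_self _ b
  have hc1 : ((m+2).choose (m+1) : ℝ) = (m:ℝ)+2 := by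
    have h := Nat.choose_symm (n := m+2) (k := 1) (by omega)
    have e : m + 2 - 1 = m + 1 := by omega
    rw [e, Nat.choose_one_right] at h
    rw [h]
    push_cast
    ring
  have hc2 : ((m+2).choose m : ℝ) * 2 = ((m:ℝ)+2) * ((m:ℝ)+1) := by
    have h := Nat.choose_symm (n := m+2) (k := 2) (by omega)
    have e : m + 2 - 2 = m := by omega
    rw [e] at h
    rw [h]
    have := choose_two_real m
    push_cast at this ⊢
    linarith
  have hcnn : ((m+2).choose (m+2) : ℝ) = 1 := by simp
  have hchpos : (0:ℝ) < ((m+2).choose m : ℝ) := by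
    exact_mod_cast Nat.choose_pos (by omega)
  rw [macP, macP, macP, h1, h2, h3, hc1, hcnn, div_one, div_pow, div_mul_eq_mul_div,
    div_le_div_iff₀ hchpos (by positivity)]
  have hE2 : macE (m+2) 2 a = (S^2 - Q)/2 := by linarith
  have hCh : ((m+2).choose m : ℝ) = ((m:ℝ)+2)*((m:ℝ)+1)/2 := by linarith
  rw [hE2, hCh]
  have key : (S^2 - ((m:ℝ)+2)*Q) * ((∏ i, b i)^2 * ((m:ℝ)+2)) ≤ 0 :=
    mul_nonpos_of_nonpos_of_nonneg (by linarith) (by positivity)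
  nlinarith [key]

lemma newton : ∀ (n : ℕ) (b : Fin n → ℝ), (∀ i, 0 < b i) → ∀ k, k + 2 ≤ n →
    macP n k b * macP n (k+2) b ≤ macP n (k+1) b ^ 2 := by
  intro n
  induction n with
  | zero => intro b hb k hk; omega
  | succ n ih =>
      intro b hb k hk
      rcases lt_or_eq_of_le hk with h | h
      · obtain ⟨c, hcpos, hcE⟩ := exists_deriv n b hb
        have t0 := macP_transfer (by omega : k ≤ n) c b (hcE k (by omega))
        have t1 := macP_transfer (by omega : k+1 ≤ n) c b (hcE (k+1) (by omega))
        have t2 := macP_transfer (by omega : k+2 ≤ n) c b (hcE (k+2) (by omega))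
        rw [← t0, ← t1, ← t2]
        exact ih c hcpos k (by omega)
      · have hn : n = k + 1 := by omega
        subst hn
        exact newton_base k b hb

lemma macP_pow_chain {n : ℕ} (b : Fin n → ℝ) (hb : ∀ i, 0 < b i) :
    ∀ k, k + 1 ≤ n → macP n (k+1) b ^ k ≤ macP n k b ^ (k+1) := by
  intro k
  induction k with
  | zero => intro _; rw [pow_zero, macP_zero, one_pow]
  | succ k ih =>
      intro hk1
      have ihk := ih (by omega)
      have hN := newton n b hb k (by omega)
      set x := macP n k b with hxd
      set y := macP n (k+1) b with hyd
      set z := macP n (k+2) b with hzd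
      have hx : 0 < x := macP_pos hb (by omega)
      have hy : 0 < y := macP_pos hb (by omega)
      have hz : 0 < z := macP_pos hb (by omega)
      have h1 : (x*z)^(k+1) ≤ (y^2)^(k+1) := pow_le_pow_left₀ (by positivity) hN (k+1)
      have h3 : x^(k+1) * z^(k+1) ≤ y^(2*(k+1)) := by
        calc x^(k+1) * z^(k+1) = (x*z)^(k+1) := (mul_pow x z (k+1)).symm
          _ ≤ (y^2)^(k+1) := h1
          _ = y^(2*(k+1)) := by rw [← pow_mul]
      have h2 : y^k * z^(k+1) ≤ x^(k+1) * z^(k+1) :=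
        mul_le_mul_of_nonneg_right ihk (by positivity)
      have h5 : z^(k+1) * y^k ≤ y^(k+2) * y^k := by
        have : y^(2*(k+1)) = y^(k+2) * y^k := by ring
        calc z^(k+1)*y^k = y^k * z^(k+1) := by ring
          _ ≤ y^(2*(k+1)) := h2.trans h3
          _ = y^(k+2) * y^k := this
      have h6 : z^(k+1) ≤ y^(k+2) := le_of_mul_le_mul_right h5 (by positivity)
      exact h6

lemma macP_rpow_consec {n k : ℕ} (b : Fin n → ℝ) (hb : ∀ i, 0 < b i)
    (hk : 1 ≤ k) (hk1 : k + 1 ≤ n) :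
    macP n (k+1) b ^ ((1:ℝ)/(k+1 : ℕ)) ≤ macP n k b ^ ((1:ℝ)/(k : ℕ)) := by
  have hx : 0 < macP n k b := macP_pos hb (by omega)
  have hy : 0 < macP n (k+1) b := macP_pos hb (by omega)
  have h := macP_pow_chain b hb k hk1
  have hkR : (0:ℝ) < (k:ℝ) := by exact_mod_cast hk
  have e : (0:ℝ) ≤ 1/((k:ℝ)*((k:ℝ)+1)) := by positivity
  have h2 := Real.rpow_le_rpow (by positivity) h e
  rw [← Real.rpow_natCast (macP n (k+1) b) k, ← Real.rpow_natCast (macP n k b) (k+1),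
    ← Real.rpow_mul hy.le, ← Real.rpow_mul hx.le] at h2
  have e1 : (k:ℝ) * (1/((k:ℝ)*((k:ℝ)+1))) = 1/(((k:ℕ)+1 : ℕ) : ℝ) := by
    push_cast
    field_simp
  have e2 : (((k:ℕ)+1 : ℕ) : ℝ) * (1/((k:ℝ)*((k:ℝ)+1))) = 1/(k:ℝ) := by
    push_cast
    field_simp
  rw [e1, e2] at h2
  exact h2

end MaclaurinAux

/-- Maclaurin's inequality: for positive reals `b₁, …, b_n` and the averages
`M k = e_k(b) / C(n,k)` (k-th elementary symmetric polynomial divided by the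
binomial coefficient), the chain `M₁ ≥ M₂^{1/2} ≥ ⋯ ≥ M_n^{1/n}` holds; i.e.,
for all `1 ≤ k ≤ l ≤ n`, `M_l^{1/l} ≤ M_k^{1/k}` (real powers). -/
theorem maclaurin_inequality (n : ℕ) (b : Fin n → ℝ) (hb : ∀ i, 0 < b i)
    (M : ℕ → ℝ)
    (hM : ∀ k, M k =
      (∑ A ∈ Finset.powersetCard k (Finset.univ : Finset (Fin n)),
          ∏ i ∈ A, b i) / (n.choose k))
    (k l : ℕ) (hk : 1 ≤ k) (hkl : k ≤ l) (hln : l ≤ n) :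
    M l ^ ((1 : ℝ) / l) ≤ M k ^ ((1 : ℝ) / k) := by

  have hMP : ∀ j, M j = macP n j b := fun j => by rw [hM j]; rfl
  rw [hMP, hMP]
  clear hM hMP M
  induction l, hkl using Nat.le_induction with
  | base => exact le_refl _
  | succ l hl ih =>
      have step := macP_rpow_consec b hb (by omega : 1 ≤ l) (by omega : l + 1 ≤ n)
      exact step.trans (ih (by omega))
end

section
/- (Lower bound on the indistinguishability parameter of scheme II) Let d, D, α be positive integers with 1 ≤ α ≤ d ≤ D, and let s : Fin d → ℕ be positive group sizes with ∑_j s_j = D. Then the real view candidate probability 𝒜 = α! · (∑_{A ⊆ Fin d, |A| = α} ∏_{j ∈ A} s_j) / (D(D−1)⋯(D−α+1)) satisfies 𝒜 ≤ (D/d)^α · ∏_{i=0}^{α−1} (d−i)/(D−i). Consequently, the indistinguishability parameter ε, defined by 𝒜 ≥ e^{−ε}, is lower-bounded by ln[(D^α/d^α) · ∏_{i=0}^{α−1} (d−i)/(D−i)] whenever that quantity is nonnegative. -/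
open Finset Real

/-- One-variable convexity step used in the induction for Maclaurin's
inequality. -/
lemma schemeII_key (d β : ℕ) (hd : 1 ≤ d) (q x : ℝ) (hq : 0 ≤ q) (hx : 0 ≤ x) :
    ((d : ℝ) - (β + 1)) * q ^ (β + 1) + (β + 1) * x * q ^ β ≤
      d * ((((d : ℝ) - 1) * q + x) / d) ^ (β + 1) := by
  have hd0 : (0 : ℝ) < d := by exact_mod_cast hd
  have hdne : (d : ℝ) ≠ 0 := ne_of_gt hd0
  rcases eq_or_lt_of_le hq with hq0 | hqpos
  · -- q = 0
    rw [← hq0]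
    cases β with
    | zero =>
      simp only [pow_one, pow_zero, mul_zero, mul_one, zero_add, Nat.cast_zero]
      rw [mul_div_cancel₀ _ hdne]
      norm_num
    | succ γ =>
      have h1 : (0:ℝ) ^ (γ + 1 + 1) = 0 := by simp
      have h2 : (0:ℝ) ^ (γ + 1) = 0 := by simp
      rw [h1, h2]
      have : (0:ℝ) ≤ (d:ℝ) * ((((d : ℝ) - 1) * 0 + x) / d) ^ (γ + 1 + 1) := by
        apply mul_nonneg (le_of_lt hd0)
        apply pow_nonneg
        apply div_nonneg _ (le_of_lt hd0)
        nlinarith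
      nlinarith [this]
  · -- q > 0
    set a : ℝ := (x - q) / (d * q) with ha_def
    have hqne : q ≠ 0 := ne_of_gt hqpos
    have ha : -2 ≤ a := by
      have h2 : -1 ≤ a := by
        rw [ha_def, le_div_iff₀ (by positivity : (0:ℝ) < ↑d * q)]
        nlinarith [mul_le_mul_of_nonneg_right (show (1:ℝ) ≤ d by exact_mod_cast hd) hq]
      linarith
    have hm : (((d : ℝ) - 1) * q + x) / d = q * (1 + a) := by
      field_simp [ha_def]
      rw [mul_add, mul_div_assoc', mul_div_cancel_left₀ _ (mul_ne_zero hdne hqne)]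
      ring
    have hbern : 1 + ((β : ℝ) + 1) * a ≤ (1 + a) ^ (β + 1) := by
      have := one_add_mul_le_pow ha (β + 1)
      push_cast at this ⊢
      linarith
    have hpow : 0 ≤ (d : ℝ) * q ^ (β + 1) := by positivity
    have hmain : (d : ℝ) * q ^ (β + 1) * (1 + ((β : ℝ) + 1) * a) ≤
        (d : ℝ) * q ^ (β + 1) * (1 + a) ^ (β + 1) :=
      mul_le_mul_of_nonneg_left hbern hpow
    have hlhs : ((d : ℝ) - (β + 1)) * q ^ (β + 1) + (β + 1) * x * q ^ β =
        (d : ℝ) * q ^ (β + 1) * (1 + ((β : ℝ) + 1) * a) := by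
      rw [ha_def]
      field_simp
      ring
    have hrhs : (d : ℝ) * ((((d : ℝ) - 1) * q + x) / d) ^ (β + 1) =
        (d : ℝ) * q ^ (β + 1) * (1 + a) ^ (β + 1) := by
      rw [hm, mul_pow, ← mul_assoc]
    rw [hlhs, hrhs]
    exact hmain

/-- Maclaurin-type inequality: the `α`-th elementary symmetric polynomial of
nonnegative reals indexed by a finset `F` is at most
`C(|F|, α) · (mean)^α`. -/
lemma schemeII_maclaurin {ι : Type*} [DecidableEq ι] (F : Finset ι)
    (s : ι → ℝ) (hs : ∀ j, 0 ≤ s j) :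
    ∀ α : ℕ, ∑ B ∈ F.powersetCard α, ∏ j ∈ B, s j ≤
      (F.card.choose α : ℝ) * ((∑ j ∈ F, s j) / F.card) ^ α := by
  induction F using Finset.induction_on with
  | empty =>
    intro α
    cases α with
    | zero => simp
    | succ β =>
      rw [Finset.powersetCard_eq_empty.2 (by simp)]
      simp
  | @insert a F ha IH =>
    intro α
    cases α with
    | zero => simp
    | succ β =>
      have hcard : (insert a F).card = F.card + 1 := Finset.card_insert_of_notMem ha
      rw [Finset.powersetCard_succ_insert ha]
      have hdisj : Disjoint (F.powersetCard (β + 1))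
          ((F.powersetCard β).image (insert a)) := by
        rw [Finset.disjoint_left]
        intro B hB hB'
        simp only [Finset.mem_image] at hB'
        obtain ⟨C, hC, rfl⟩ := hB'
        have : insert a C ⊆ F := (Finset.mem_powersetCard.1 hB).1
        exact ha (this (Finset.mem_insert_self a C))
      rw [Finset.sum_union hdisj]
      have himg : ∑ B ∈ (F.powersetCard β).image (insert a), ∏ j ∈ B, s j =
          s a * ∑ B ∈ F.powersetCard β, ∏ j ∈ B, s j := by
        rw [Finset.sum_image, Finset.mul_sum]
        · apply Finset.sum_congr rfl
          intro B hB
          have haB : a ∉ B := fun h =>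
            ha ((Finset.mem_powersetCard.1 hB).1 h)
          rw [Finset.prod_insert haB]
        · intro B hB C hC hBC
          have haB : a ∉ B := fun h => ha ((Finset.mem_powersetCard.1 hB).1 h)
          have haC : a ∉ C := fun h => ha ((Finset.mem_powersetCard.1 hC).1 h)
          have := congrArg (Finset.erase · a) hBC
          simpa [Finset.erase_insert, haB, haC] using this
      rw [himg, hcard]
      set n := F.card with hn
      set q : ℝ := (∑ j ∈ F, s j) / n with hq_def
      have hq : 0 ≤ q :=
        div_nonneg (Finset.sum_nonneg fun j _ => hs j) (Nat.cast_nonneg n)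
      have hx : 0 ≤ s a := hs a
      have hsumF : ∑ j ∈ F, s j = n * q := by
        rcases Nat.eq_zero_or_pos n with h0 | hpos
        · have hF : F = ∅ := Finset.card_eq_zero.1 h0
          simp [hF, h0]
        · rw [hq_def]
          have hne : (n : ℝ) ≠ 0 := by positivity
          field_simp
      have hsum_ins : ∑ j ∈ insert a F, s j = s a + n * q := by
        rw [Finset.sum_insert ha, hsumF]
      have e2 : ((n + 1 : ℕ) : ℝ) = (n : ℝ) + 1 := by push_cast; ring
      have key' : ((n : ℝ) + 1 - ((β : ℝ) + 1)) * q ^ (β + 1) +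
          ((β : ℝ) + 1) * s a * q ^ β ≤
          ((n : ℝ) + 1) * ((s a + (n : ℝ) * q) / ((n : ℝ) + 1)) ^ (β + 1) := by
        have h := schemeII_key (n + 1) β (Nat.le_add_left 1 n) q (s a) hq hx
        have e1 : (((n + 1 : ℕ) : ℝ) - 1) * q + s a = s a + (n : ℝ) * q := by
          push_cast; ring
        rw [e1, e2] at h
        exact h
      -- choose identities over ℝ
      have h2 : ((n : ℝ) + 1) * (n.choose β : ℝ) =
          ((n + 1).choose (β + 1) : ℝ) * ((β : ℝ) + 1) := by
        exact_mod_cast Nat.add_one_mul_choose_eq n β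
      have hpascal : ((n + 1).choose (β + 1) : ℝ) =
          (n.choose β : ℝ) + (n.choose (β + 1) : ℝ) := by
        exact_mod_cast Nat.choose_succ_succ n β
      have h1 : ((n : ℝ) + 1) * (n.choose (β + 1) : ℝ) =
          ((n + 1).choose (β + 1) : ℝ) * (((n : ℝ) + 1) - ((β : ℝ) + 1)) := by
        nlinarith [h2, hpascal]
      have hC : (0 : ℝ) ≤ ((n + 1).choose (β + 1) : ℝ) := Nat.cast_nonneg _
      have step1 : ∑ B ∈ F.powersetCard (β + 1), ∏ j ∈ B, s j +
          s a * ∑ B ∈ F.powersetCard β, ∏ j ∈ B, s j ≤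
          (n.choose (β + 1) : ℝ) * q ^ (β + 1) +
            s a * ((n.choose β : ℝ) * q ^ β) := by
        exact add_le_add (IH (β + 1)) (mul_le_mul_of_nonneg_left (IH β) hx)
      refine step1.trans ?_
      rw [hsum_ins, e2]
      have hnpos : (0 : ℝ) < (n : ℝ) + 1 := by linarith [(Nat.cast_nonneg n : (0:ℝ) ≤ n)]
      have hfinal : ((n : ℝ) + 1) * ((n.choose (β + 1) : ℝ) * q ^ (β + 1) +
          s a * ((n.choose β : ℝ) * q ^ β)) =
          ((n + 1).choose (β + 1) : ℝ) *
            ((((n : ℝ) + 1) - ((β : ℝ) + 1)) * q ^ (β + 1) +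
              ((β : ℝ) + 1) * s a * q ^ β) := by
        linear_combination q ^ (β + 1) * h1 + (s a * q ^ β) * h2
      have hfin2 : ((n : ℝ) + 1) * ((n.choose (β + 1) : ℝ) * q ^ (β + 1) +
          s a * ((n.choose β : ℝ) * q ^ β)) ≤
          ((n : ℝ) + 1) * (((n + 1).choose (β + 1) : ℝ) *
            ((s a + (n : ℝ) * q) / ((n : ℝ) + 1)) ^ (β + 1)) := by
        rw [hfinal]
        calc ((n + 1).choose (β + 1) : ℝ) *
            ((((n : ℝ) + 1) - ((β : ℝ) + 1)) * q ^ (β + 1) +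
              ((β : ℝ) + 1) * s a * q ^ β)
            ≤ ((n + 1).choose (β + 1) : ℝ) *
              (((n : ℝ) + 1) * ((s a + (n : ℝ) * q) / ((n : ℝ) + 1)) ^ (β + 1)) :=
              mul_le_mul_of_nonneg_left key' hC
          _ = ((n : ℝ) + 1) * (((n + 1).choose (β + 1) : ℝ) *
              ((s a + (n : ℝ) * q) / ((n : ℝ) + 1)) ^ (β + 1)) := by ring
      exact le_of_mul_le_mul_left hfin2 hnpos

/-- Lower bound on the indistinguishability parameter of scheme II.  With `D`
distinct IP addresses grouped into `d` prefix groups of positive sizes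
`s j` (summing to `D`) and an adversary knowing `α` prefixes
(`1 ≤ α ≤ d ≤ D`), the real-view-candidate probability
`𝒜 = α! · (∑_{|A| = α} ∏_{j ∈ A} s j) / (D(D−1)⋯(D−α+1))` satisfies
`𝒜 ≤ (D/d)^α · ∏_{i=0}^{α−1} (d−i)/(D−i)`.  Consequently, whenever
`ln[(D^α/d^α) · ∏_{i=0}^{α−1} (d−i)/(D−i)]` is nonnegative, any `ε` with
`𝒜 ≥ e^{−ε}` satisfies `ε ≥ ln[(D^α/d^α) · ∏_{i=0}^{α−1} (d−i)/(D−i)]`. -/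
theorem schemeII_epsilon_lower_bound (D d α : ℕ) (hα : 1 ≤ α) (hαd : α ≤ d)
    (hdD : d ≤ D) (s : Fin d → ℕ) (hspos : ∀ j, 0 < s j)
    (hs : ∑ j, s j = D) (A : ℝ)
    (hA : A = (α.factorial *
        ∑ B ∈ Finset.powersetCard α (Finset.univ : Finset (Fin d)),
          ∏ j ∈ B, (s j : ℝ)) /
      ∏ i ∈ Finset.range α, ((D : ℝ) - i)) :
    A ≤ ((D : ℝ) / d) ^ α * ∏ i ∈ Finset.range α, ((d : ℝ) - i) / ((D : ℝ) - i) ∧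
      (0 ≤ Real.log (((D : ℝ) ^ α / (d : ℝ) ^ α) *
            ∏ i ∈ Finset.range α, ((d : ℝ) - i) / ((D : ℝ) - i)) →
        ∀ ε : ℝ, Real.exp (-ε) ≤ A →
          Real.log (((D : ℝ) ^ α / (d : ℝ) ^ α) *
              ∏ i ∈ Finset.range α, ((d : ℝ) - i) / ((D : ℝ) - i)) ≤ ε) := by
  have hd1 : 1 ≤ d := hα.trans hαd
  have hD1 : 1 ≤ D := hd1.trans hdD
  have hdpos : (0 : ℝ) < d := by exact_mod_cast hd1
  have hDpos : (0 : ℝ) < D := by exact_mod_cast hD1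
  have hdDR : (d : ℝ) ≤ D := by exact_mod_cast hdD
  have hDi : ∀ i ∈ Finset.range α, (0 : ℝ) < (D : ℝ) - i := by
    intro i hi
    have hiD : i < D := lt_of_lt_of_le (Finset.mem_range.1 hi) (hαd.trans hdD)
    have : (i : ℝ) < D := by exact_mod_cast hiD
    linarith
  have hP : (0 : ℝ) < ∏ i ∈ Finset.range α, ((D : ℝ) - i) := Finset.prod_pos hDi
  have hdi : ∀ i ∈ Finset.range α, (0 : ℝ) ≤ (d : ℝ) - i := by
    intro i hi
    have hid : i < d := lt_of_lt_of_le (Finset.mem_range.1 hi) hαd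
    have : (i : ℝ) < d := by exact_mod_cast hid
    linarith
  -- Maclaurin bound for the elementary symmetric sum
  have hmac := schemeII_maclaurin (Finset.univ : Finset (Fin d))
    (fun j => (s j : ℝ)) (fun j => Nat.cast_nonneg _) α
  have hcard : (Finset.univ : Finset (Fin d)).card = d := by simp
  have hsum : ∑ j ∈ (Finset.univ : Finset (Fin d)), ((s j : ℝ)) = (D : ℝ) := by
    exact_mod_cast congrArg (Nat.cast : ℕ → ℝ) hs
  rw [hcard, hsum] at hmac
  -- descending factorial identity
  have hfact : (α.factorial : ℝ) * (d.choose α : ℝ) =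
      ∏ i ∈ Finset.range α, ((d : ℝ) - i) := by
    have h1 : (α.factorial * d.choose α : ℕ) = ∏ i ∈ Finset.range α, (d - i) := by
      rw [← Nat.descFactorial_eq_factorial_mul_choose,
        Nat.descFactorial_eq_prod_range]
    calc (α.factorial : ℝ) * (d.choose α : ℝ)
        = ((α.factorial * d.choose α : ℕ) : ℝ) := by push_cast; ring
      _ = ((∏ i ∈ Finset.range α, (d - i) : ℕ) : ℝ) := by exact_mod_cast h1
      _ = ∏ i ∈ Finset.range α, ((d : ℝ) - i) := by
          rw [Nat.cast_prod]
          apply Finset.prod_congr rfl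
          intro i hi
          have : i ≤ d := le_of_lt (lt_of_lt_of_le (Finset.mem_range.1 hi) hαd)
          rw [Nat.cast_sub this]
  -- A ≤ B
  have hcancel : (∏ i ∈ Finset.range α, ((d : ℝ) - i) / ((D : ℝ) - i)) *
      ∏ i ∈ Finset.range α, ((D : ℝ) - i) = ∏ i ∈ Finset.range α, ((d : ℝ) - i) := by
    rw [Finset.prod_div_distrib, div_mul_cancel₀ _ (ne_of_gt hP)]
  have hAB : A ≤ ((D : ℝ) / d) ^ α *
      ∏ i ∈ Finset.range α, ((d : ℝ) - i) / ((D : ℝ) - i) := by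
    rw [hA, div_le_iff₀ hP]
    have h3 : (α.factorial : ℝ) *
        (∑ B ∈ Finset.powersetCard α (Finset.univ : Finset (Fin d)),
          ∏ j ∈ B, (s j : ℝ)) ≤
        (α.factorial : ℝ) * ((d.choose α : ℝ) * ((D : ℝ) / d) ^ α) :=
      mul_le_mul_of_nonneg_left hmac (Nat.cast_nonneg _)
    refine h3.trans_eq ?_
    calc (α.factorial : ℝ) * ((d.choose α : ℝ) * ((D : ℝ) / d) ^ α)
        = ((D : ℝ) / d) ^ α * ((α.factorial : ℝ) * (d.choose α : ℝ)) := by ring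
      _ = ((D : ℝ) / d) ^ α * ∏ i ∈ Finset.range α, ((d : ℝ) - i) := by rw [hfact]
      _ = ((D : ℝ) / d) ^ α *
          ((∏ i ∈ Finset.range α, ((d : ℝ) - i) / ((D : ℝ) - i)) *
            ∏ i ∈ Finset.range α, ((D : ℝ) - i)) := by rw [hcancel]
      _ = ((D : ℝ) / d) ^ α *
          (∏ i ∈ Finset.range α, ((d : ℝ) - i) / ((D : ℝ) - i)) *
          ∏ i ∈ Finset.range α, ((D : ℝ) - i) := by ring
  -- B ≤ 1
  have hB1 : ((D : ℝ) / d) ^ α *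
      ∏ i ∈ Finset.range α, ((d : ℝ) - i) / ((D : ℝ) - i) ≤ 1 := by
    have hpc : ((D : ℝ) / d) ^ α = ∏ _i ∈ Finset.range α, ((D : ℝ) / d) := by
      rw [Finset.prod_const, Finset.card_range]
    rw [hpc, ← Finset.prod_mul_distrib]
    apply Finset.prod_le_one
    · intro i hi
      exact mul_nonneg (div_nonneg hDpos.le hdpos.le)
        (div_nonneg (hdi i hi) (hDi i hi).le)
    · intro i hi
      rw [div_mul_div_comm, div_le_one (mul_pos hdpos (hDi i hi))]
      have hi0 : (0 : ℝ) ≤ (i : ℝ) := Nat.cast_nonneg i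
      nlinarith [mul_le_mul_of_nonneg_right hdDR hi0]
  refine ⟨hAB, ?_⟩
  intro _hlog ε hε
  have hBeq : ((D : ℝ) ^ α / (d : ℝ) ^ α) *
      ∏ i ∈ Finset.range α, ((d : ℝ) - i) / ((D : ℝ) - i) =
      ((D : ℝ) / d) ^ α *
      ∏ i ∈ Finset.range α, ((d : ℝ) - i) / ((D : ℝ) - i) := by rw [div_pow]
  have hL1 : ((D : ℝ) ^ α / (d : ℝ) ^ α) *
      ∏ i ∈ Finset.range α, ((d : ℝ) - i) / ((D : ℝ) - i) ≤ 1 := by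
    rw [hBeq]; exact hB1
  have hL0 : (0 : ℝ) ≤ ((D : ℝ) ^ α / (d : ℝ) ^ α) *
      ∏ i ∈ Finset.range α, ((d : ℝ) - i) / ((D : ℝ) - i) := by
    apply mul_nonneg (by positivity)
    exact Finset.prod_nonneg fun i hi => div_nonneg (hdi i hi) (hDi i hi).le
  have hlogL := Real.log_nonpos hL0 hL1
  have hexp1 : Real.exp (-ε) ≤ 1 := by
    refine hε.trans (hAB.trans ?_)
    exact hB1
  have hε0 : -ε ≤ 0 := Real.exp_le_one_iff.1 hexp1
  linarith
end
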